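/- Let π₀ = N(0, σ²I_d) and δ ∈ ℝ^d with ‖δ‖₂ > 0. For λ > 0, ∫ (λπ₀(z) − π₀(z−δ))₊ dz = λ·Φ(‖δ‖₂/(2σ) + σ ln λ/‖δ‖₂) − Φ(−‖δ‖₂/(2σ) + σ ln λ/‖δ‖₂), where Φ is the standard Gaussian CDF. -/

import Mathlib

open MeasureTheory Real

/-- CDF of the one-dimensional standard normal distribution. -/
noncomputable def stdNormalCDF (x : ℝ) : ℝ :=
  ∫ t in Set.Iic x, (Real.sqrt (2 * π))⁻¹ * Real.exp (-t ^ 2 / 2)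

lemma gauss_cdf {σ : ℝ} (hσ : 0 < σ) (a : ℝ) :
    ∫ t in Set.Iic a, (Real.sqrt (2 * π) * σ)⁻¹ * Real.exp (-t ^ 2 / (2 * σ ^ 2))
      = stdNormalCDF (a / σ) := by
  set φ : ℝ → ℝ := fun x => (Real.sqrt (2 * π))⁻¹ * Real.exp (-x ^ 2 / 2) with hφ
  set g : ℝ → ℝ := Set.indicator (Set.Iic a)
    (fun t => (Real.sqrt (2 * π) * σ)⁻¹ * Real.exp (-t ^ 2 / (2 * σ ^ 2))) with hg
  have h1 : ∫ x : ℝ, g (σ * x) = |σ⁻¹| • ∫ y, g y := Measure.integral_comp_mul_left g σ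
  have h3 : (fun x : ℝ => g (σ * x))
      = fun x => σ⁻¹ • Set.indicator (Set.Iic (a / σ)) φ x := by
    funext x
    rw [hg, Set.indicator_apply, Set.indicator_apply, smul_eq_mul]
    have hmem : σ * x ∈ Set.Iic a ↔ x ∈ Set.Iic (a / σ) := by
      simp [Set.mem_Iic, le_div_iff₀ hσ, mul_comm]
    by_cases hx : x ∈ Set.Iic (a / σ)
    · rw [if_pos (hmem.2 hx), if_pos hx, hφ]
      have he : -(σ * x) ^ 2 / (2 * σ ^ 2) = -x ^ 2 / 2 := by
        field_simp
      rw [he, mul_inv]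
      ring
    · rw [if_neg (fun h => hx (hmem.1 h)), if_neg hx, mul_zero]
  have h4 : ∫ x : ℝ, g (σ * x) = σ⁻¹ * stdNormalCDF (a / σ) := by
    rw [h3]
    rw [integral_smul]
    rw [integral_indicator measurableSet_Iic]
    simp only [stdNormalCDF, smul_eq_mul, hφ]
  rw [← integral_indicator measurableSet_Iic, ← hg]
  have : ∫ y, g y = σ * ∫ x : ℝ, g (σ * x) := by
    rw [h1, abs_of_pos (inv_pos.2 hσ), smul_eq_mul, ← mul_assoc, mul_inv_cancel₀ hσ.ne', one_mul]
  rw [this, h4, ← mul_assoc, mul_inv_cancel₀ hσ.ne', one_mul]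

lemma shift_Iic (f : ℝ → ℝ) (a r : ℝ) :
    ∫ t in Set.Iic a, f (t - r) = ∫ t in Set.Iic (a - r), f t := by
  rw [← integral_indicator measurableSet_Iic, ← integral_indicator measurableSet_Iic]
  have : (Set.indicator (Set.Iic a) fun t => f (t - r))
      = fun t => Set.indicator (Set.Iic (a - r)) f (t - r) := by
    funext t
    rw [Set.indicator_apply, Set.indicator_apply]
    have : t ∈ Set.Iic a ↔ t - r ∈ Set.Iic (a - r) := by
      simp [Set.mem_Iic, sub_le_sub_iff_right]
    rw [if_congr this rfl rfl]
  rw [this, integral_sub_right_eq_self (Set.indicator (Set.Iic (a - r)) f) r]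

lemma gauss_total {σ : ℝ} (hσ : 0 < σ) :
    ∫ t : ℝ, (Real.sqrt (2 * π) * σ)⁻¹ * Real.exp (-t ^ 2 / (2 * σ ^ 2)) = 1 := by
  have hb : (0:ℝ) < (2 * σ ^ 2)⁻¹ := by positivity
  have he : ∀ t : ℝ, -t ^ 2 / (2 * σ ^ 2) = -(2 * σ ^ 2)⁻¹ * t ^ 2 := by
    intro t; field_simp
  simp_rw [he]
  rw [integral_const_mul, integral_gaussian]
  have : π / (2 * σ ^ 2)⁻¹ = π * (2 * σ ^ 2) := by field_simp
  rw [this]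
  have h2π : Real.sqrt (π * (2 * σ ^ 2)) = Real.sqrt 2 * Real.sqrt π * σ := by
    rw [show (π * (2 * σ ^ 2) : ℝ) = (Real.sqrt 2 * Real.sqrt π * σ) ^ 2 by
      rw [mul_pow, mul_pow, Real.sq_sqrt two_pos.le, Real.sq_sqrt pi_pos.le]; ring]
    exact Real.sqrt_sq (by positivity)
  rw [h2π]
  have : Real.sqrt (2 * π) = Real.sqrt 2 * Real.sqrt π := Real.sqrt_mul two_pos.le π
  rw [this]
  exact inv_mul_cancel₀ (by positivity)

lemma one_dim {σ r lam : ℝ} (hσ : 0 < σ) (hr : 0 < r) (hlam : 0 < lam) :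
    ∫ t : ℝ, max (lam * ((Real.sqrt (2*π)*σ)⁻¹ * Real.exp (-t^2/(2*σ^2)))
        - (Real.sqrt (2*π)*σ)⁻¹ * Real.exp (-(t-r)^2/(2*σ^2))) 0
      = lam * stdNormalCDF (r/(2*σ) + σ * Real.log lam / r)
        - stdNormalCDF (-r/(2*σ) + σ * Real.log lam / r) := by
  set c : ℝ := (Real.sqrt (2*π)*σ)⁻¹ with hc
  have hcpos : 0 < c := by rw [hc]; positivity
  set c₀ : ℝ := r/2 + σ^2 * Real.log lam / r with hc₀
  set L := Real.log lam with hL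
  have hlamL : lam = Real.exp L := (Real.exp_log hlam).symm
  have hσ2 : (0:ℝ) < 2 * σ^2 := by positivity
  have hkey : ∀ t : ℝ, t ≤ c₀ ↔
      Real.exp (-(t-r)^2/(2*σ^2)) ≤ lam * Real.exp (-t^2/(2*σ^2)) := by
    intro t
    rw [hlamL, ← Real.exp_add, Real.exp_le_exp]
    have heq : L + -t^2/(2*σ^2) - (-(t-r)^2/(2*σ^2))
        = (2*σ^2*L - 2*r*t + r^2)/(2*σ^2) := by field_simp; ring
    constructor
    · intro ht
      have h1 : t * r ≤ (r/2 + σ^2*L/r) * r := mul_le_mul_of_nonneg_right ht hr.le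
      have h2 : (r/2 + σ^2*L/r) * r = r^2/2 + σ^2*L := by field_simp
      have h3 : 0 ≤ (2*σ^2*L - 2*r*t + r^2)/(2*σ^2) :=
        div_nonneg (by nlinarith) hσ2.le
      linarith [heq ▸ h3]
    · intro ht
      have h3 : 0 ≤ (2*σ^2*L - 2*r*t + r^2)/(2*σ^2) := by linarith [heq]
      have h4 : 0 ≤ 2*σ^2*L - 2*r*t + r^2 := by
        by_contra hneg
        push_neg at hneg
        have := div_neg_of_neg_of_pos hneg hσ2
        linarith
      have h5 : t * r ≤ r^2/2 + σ^2*L := by nlinarith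
      rw [hc₀]
      rw [← mul_le_mul_iff_of_pos_right hr]
      calc t * r ≤ r^2/2 + σ^2*L := h5
        _ = (r/2 + σ^2*L/r) * r := by field_simp
  have hind : (fun t => max (lam * (c * Real.exp (-t^2/(2*σ^2)))
        - c * Real.exp (-(t-r)^2/(2*σ^2))) 0)
      = Set.indicator (Set.Iic c₀) (fun t => lam * (c * Real.exp (-t^2/(2*σ^2)))
        - c * Real.exp (-(t-r)^2/(2*σ^2))) := by
    funext t
    rw [Set.indicator_apply]
    by_cases ht : t ∈ Set.Iic c₀
    · rw [if_pos ht, max_eq_left]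
      have := (hkey t).1 ht
      have : c * Real.exp (-(t-r)^2/(2*σ^2)) ≤ c * (lam * Real.exp (-t^2/(2*σ^2))) :=
        mul_le_mul_of_nonneg_left this hcpos.le
      nlinarith
    · rw [if_neg ht, max_eq_right]
      have ht' : c₀ < t := lt_of_not_ge ht
      have h6 : ¬ (Real.exp (-(t-r)^2/(2*σ^2)) ≤ lam * Real.exp (-t^2/(2*σ^2))) :=
        fun h => ht ((hkey t).2 h)
      push_neg at h6
      have : c * (lam * Real.exp (-t^2/(2*σ^2))) ≤ c * Real.exp (-(t-r)^2/(2*σ^2)) :=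
        mul_le_mul_of_nonneg_left h6.le hcpos.le
      nlinarith
  rw [hind, integral_indicator measurableSet_Iic]
  have hgbase : Integrable (fun t : ℝ => Real.exp (-t^2/(2*σ^2))) := by
    have h := integrable_exp_neg_mul_sq (show (0:ℝ) < (2*σ^2)⁻¹ by positivity)
    have he : ∀ t : ℝ, -(2*σ^2)⁻¹ * t^2 = -t^2/(2*σ^2) := by intro t; field_simp
    simpa only [he] using h
  have hg1 : Integrable (fun t : ℝ => c * Real.exp (-t^2/(2*σ^2))) := hgbase.const_mul c
  have hg2 : Integrable (fun t : ℝ => c * Real.exp (-(t-r)^2/(2*σ^2))) := hg1.comp_sub_right r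
  rw [integral_sub ((hg1.const_mul lam).integrableOn) hg2.integrableOn]
  rw [MeasureTheory.integral_const_mul]
  have e1 : ∫ t in Set.Iic c₀, c * Real.exp (-t^2/(2*σ^2)) = stdNormalCDF (c₀/σ) := by
    rw [hc]; exact gauss_cdf hσ c₀
  have e2 : ∫ t in Set.Iic c₀, c * Real.exp (-(t-r)^2/(2*σ^2)) = stdNormalCDF ((c₀-r)/σ) := by
    rw [shift_Iic (fun t => c * Real.exp (-t^2/(2*σ^2))) c₀ r, hc]
    exact gauss_cdf hσ (c₀ - r)
  rw [e1, e2]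
  have a1 : c₀/σ = r/(2*σ) + σ * L / r := by rw [hc₀]; field_simp
  have a2 : (c₀-r)/σ = -r/(2*σ) + σ * L / r := by rw [hc₀]; field_simp; ring
  rw [a1, a2]

theorem stmt_8 {d : ℕ} (σ : ℝ) (hσ : 0 < σ)
    (π₀ : EuclideanSpace ℝ (Fin d) → ℝ)
    (hπ₀ : π₀ = fun z => (2 * π * σ ^ 2) ^ (-(d:ℝ) / 2) * Real.exp (-‖z‖ ^ 2 / (2 * σ ^ 2)))
    (δ : EuclideanSpace ℝ (Fin d)) (hδ : 0 < ‖δ‖)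
    (lam : ℝ) (hlam : 0 < lam) :
    ∫ z, max (lam * π₀ z - π₀ (z - δ)) 0 =
      lam * stdNormalCDF (‖δ‖ / (2 * σ) + σ * Real.log lam / ‖δ‖)
        - stdNormalCDF (-‖δ‖ / (2 * σ) + σ * Real.log lam / ‖δ‖) := by
  have hd : 0 < d := by
    rcases Nat.eq_zero_or_pos d with h | h
    · exfalso
      subst h
      have hz : δ = 0 := Subsingleton.elim δ 0
      rw [hz, norm_zero] at hδ
      exact lt_irrefl 0 hδ
    · exact h
  set r : ℝ := ‖δ‖ with hrdef
  set c : ℝ := (Real.sqrt (2*π) * σ)⁻¹ with hc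
  have hcpos : 0 < c := by rw [hc]; positivity
  set C : ℝ := (2 * π * σ ^ 2) ^ (-(d:ℝ) / 2) with hCdef
  have hC : C = c ^ d := by
    have hb : (0:ℝ) < 2 * π * σ ^ 2 := by positivity
    rw [hCdef, hc, show -(d:ℝ)/2 = (-(1:ℝ)/2) * d by ring, Real.rpow_mul hb.le,
      Real.rpow_natCast]
    congr 1
    rw [show (-(1:ℝ)/2) = -(1/2 : ℝ) by ring, Real.rpow_neg hb.le, ← Real.sqrt_eq_rpow]
    congr 1
    rw [show (2 * π * σ ^ 2 : ℝ) = (2 * π) * σ ^ 2 by ring,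
      Real.sqrt_mul (by positivity) (σ ^ 2), Real.sqrt_sq hσ.le]
  set i0 : Fin d := ⟨0, hd⟩ with hi0
  set e₀ : EuclideanSpace ℝ (Fin d) := EuclideanSpace.single i0 (1:ℝ) with he₀def
  have he₀ : ‖e₀‖ = 1 := by rw [he₀def, EuclideanSpace.norm_single]; norm_num
  set u : EuclideanSpace ℝ (Fin d) := r⁻¹ • δ with hudef
  have hu : ‖u‖ = 1 := by
    rw [hudef, norm_smul, norm_inv, Real.norm_eq_abs, abs_of_pos hδ, ← hrdef]
    exact inv_mul_cancel₀ hδ.ne'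
  set T := Submodule.reflection (Submodule.span ℝ {e₀ - u})ᗮ with hTdef
  have hT : T e₀ = u := Submodule.reflection_sub (he₀.trans hu.symm)
  have hTδ : T (r • e₀) = δ := by
    rw [T.map_smul, hT, hudef, smul_smul, mul_inv_cancel₀ hδ.ne', one_smul]
  set h : Fin d → ℝ → ℝ := fun i t => if i = i0 then
      max (lam * (c * Real.exp (-t^2/(2*σ^2))) - c * Real.exp (-(t-r)^2/(2*σ^2))) 0
    else c * Real.exp (-t^2/(2*σ^2)) with hh
  have hnorm : ∀ v : EuclideanSpace ℝ (Fin d), ‖v‖^2 = ∑ i, (v i)^2 := by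
    intro v
    rw [EuclideanSpace.norm_eq, Real.sq_sqrt (by positivity)]
    refine Finset.sum_congr rfl fun i _ => ?_
    rw [Real.norm_eq_abs, sq_abs]
  have hprod : ∀ g : Fin d → ℝ, c ^ d * Real.exp (-(∑ i, g i)/(2*σ^2))
      = ∏ i, c * Real.exp (-(g i)/(2*σ^2)) := by
    intro g
    rw [Finset.prod_mul_distrib, Finset.prod_const, Finset.card_univ, Fintype.card_fin]
    congr 1
    rw [← Real.exp_sum]
    congr 1
    rw [neg_div, Finset.sum_div, ← Finset.sum_neg_distrib]
    exact Finset.sum_congr rfl fun i _ => (neg_div _ _).symm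
  have claim : ∀ x : Fin d → ℝ,
      max (lam * (C * Real.exp (-(∑ i, (x i)^2)/(2*σ^2)))
        - C * Real.exp (-(∑ i, (x i - if i = i0 then r else 0)^2)/(2*σ^2))) 0
      = ∏ i, h i (x i) := by
    intro x
    have hA := hprod (fun i => (x i)^2)
    have hB := hprod (fun i => (x i - if i = i0 then r else 0)^2)
    rw [hC, hA, hB]
    set P : ℝ := ∏ i ∈ Finset.univ.erase i0, (c * Real.exp (-(x i)^2/(2*σ^2))) with hP
    have hPnn : 0 ≤ P := Finset.prod_nonneg fun i _ => by positivity
    have hA2 : (∏ i, c * Real.exp (-(x i)^2/(2*σ^2)))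
        = c * Real.exp (-(x i0)^2/(2*σ^2)) * P :=
      (Finset.mul_prod_erase Finset.univ _ (Finset.mem_univ i0)).symm
    have hB2 : (∏ i, c * Real.exp (-((x i - if i = i0 then r else 0))^2/(2*σ^2)))
        = c * Real.exp (-(x i0 - r)^2/(2*σ^2)) * P := by
      have hfun : (fun i => c * Real.exp (-((x i - if i = i0 then r else 0))^2/(2*σ^2)))
          = fun i => if i = i0 then c * Real.exp (-(x i - r)^2/(2*σ^2))
            else c * Real.exp (-(x i)^2/(2*σ^2)) := by
        funext i
        by_cases hi : i = i0
        · rw [if_pos hi, if_pos hi]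
        · rw [if_neg hi, if_neg hi, sub_zero]
      rw [hfun, ← Finset.mul_prod_erase Finset.univ _ (Finset.mem_univ i0), if_pos rfl]
      congr 1
      refine Finset.prod_congr rfl fun i hi => ?_
      rw [if_neg (Finset.ne_of_mem_erase hi)]
    have hR2 : (∏ i, h i (x i)) = h i0 (x i0) * P := by
      rw [← Finset.mul_prod_erase Finset.univ _ (Finset.mem_univ i0)]
      congr 1
      refine Finset.prod_congr rfl fun i hi => ?_
      rw [hh]
      simp only [if_neg (Finset.ne_of_mem_erase hi)]
    have hfin : h i0 (x i0) = max (lam * (c * Real.exp (-(x i0)^2/(2*σ^2)))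
        - c * Real.exp (-(x i0 - r)^2/(2*σ^2))) 0 := if_pos rfl
    have hring : lam * (c * Real.exp (-(x i0)^2/(2*σ^2)) * P)
        - c * Real.exp (-(x i0 - r)^2/(2*σ^2)) * P
        = (lam * (c * Real.exp (-(x i0)^2/(2*σ^2)))
            - c * Real.exp (-(x i0 - r)^2/(2*σ^2))) * P := by ring
    rw [hA2, hB2, hR2, hfin, hring, max_mul_of_nonneg _ _ hPnn, zero_mul]
  have step1 : (∫ z, max (lam * π₀ z - π₀ (z - δ)) 0)
      = ∫ w, max (lam * π₀ (T w) - π₀ (T w - δ)) 0 :=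
    (T.measurePreserving.integral_comp T.toHomeomorph.measurableEmbedding
      (fun z => max (lam * π₀ z - π₀ (z - δ)) 0)).symm
  have hpt : ∀ w : EuclideanSpace ℝ (Fin d), max (lam * π₀ (T w) - π₀ (T w - δ)) 0
      = max (lam * (C * Real.exp (-‖w‖^2/(2*σ^2)))
          - C * Real.exp (-‖w - r • e₀‖^2/(2*σ^2))) 0 := by
    intro w
    have h1 : T w - δ = T (w - r • e₀) := by rw [map_sub, hTδ]
    rw [hπ₀]
    simp only [h1, T.norm_map, ← hCdef]
  have step2 : (∫ w : EuclideanSpace ℝ (Fin d),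
        max (lam * (C * Real.exp (-‖w‖^2/(2*σ^2)))
          - C * Real.exp (-‖w - r • e₀‖^2/(2*σ^2))) 0)
      = ∫ x : Fin d → ℝ, ∏ i, h i (x i) := by
    rw [← (((EuclideanSpace.volume_preserving_symm_measurableEquiv_toLp (Fin d)).symm
        ((MeasurableEquiv.toLp 2 (Fin d → ℝ)).symm)).integral_comp
      (MeasurableEquiv.measurableEmbedding _) _)]
    refine integral_congr_ae (Filter.Eventually.of_forall fun x => ?_)
    have hcoord : ∀ i, (((MeasurableEquiv.toLp 2 (Fin d → ℝ)).symm).symm x) i = x i :=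
      fun i => rfl
    have hsub : ∀ i, (((MeasurableEquiv.toLp 2 (Fin d → ℝ)).symm).symm x - r • e₀) i
        = x i - if i = i0 then r else 0 := by
      intro i
      simp only [PiLp.sub_apply, PiLp.smul_apply, hcoord, he₀def,
        EuclideanSpace.single_apply, smul_eq_mul, mul_ite, mul_one, mul_zero]
    have hn1 : ‖((MeasurableEquiv.toLp 2 (Fin d → ℝ)).symm).symm x‖^2 = ∑ i, (x i)^2 := by
      rw [hnorm]
      exact Finset.sum_congr rfl fun i _ => by rw [hcoord]
    have hn2 : ‖((MeasurableEquiv.toLp 2 (Fin d → ℝ)).symm).symm x - r • e₀‖^2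
        = ∑ i, (x i - if i = i0 then r else 0)^2 := by
      rw [hnorm]
      exact Finset.sum_congr rfl fun i _ => by rw [hsub]
    dsimp only
    rw [hn1, hn2, claim]
  rw [step1]
  simp_rw [hpt]
  rw [step2, MeasureTheory.integral_fintype_prod_volume_eq_prod h]
  rw [Finset.prod_eq_single i0 (fun i _ hi => by
      rw [hh]; simp only [if_neg hi]; rw [hc]; exact gauss_total hσ)
    (fun hmem => absurd (Finset.mem_univ i0) hmem)]
  have hfin2 : ∀ t, h i0 t = max (lam * (c * Real.exp (-t^2/(2*σ^2)))
      - c * Real.exp (-(t-r)^2/(2*σ^2))) 0 := fun t => if_pos rfl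
  simp_rw [hfin2, hc]
  exact one_dim hσ hδ hlam
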